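/- arXiv:1501.04933 — 5 statements merged into one kernel-verified Lean document; each statement's English description precedes it below -/
import Mathlib

section
/- Let A be a p×p real symmetric matrix, let V be a p×d matrix (d < p) with orthonormal columns, Π = VVᵀ, and let U be a p×(p−d) matrix whose columns form an orthonormal basis of the orthogonal complement of the column space of V. Let UᵀAU = Σ_{i=1}^{p−d} γ_i η_i η_iᵀ be an orthonormal eigendecomposition, and for θ ∈ ℝ set γ_i⁺(θ) = min(max(γ_i − θ, 0), 1). Then there exists θ with Σ_{i=1}^{p−d} γ_i⁺(θ) = 1, and the unique minimizer of ‖A − B‖_F² over B ∈ D_Π equals U[Σ_{i=1}^{p−d} γ_i⁺(θ) η_i η_iᵀ]Uᵀ. -/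
open Matrix Finset

noncomputable def frobInner {p : ℕ} (A B : Matrix (Fin p) (Fin p) ℝ) : ℝ := (Aᵀ * B).trace

noncomputable def frobNorm {a b : ℕ} (A : Matrix (Fin a) (Fin b) ℝ) : ℝ :=
  Real.sqrt (∑ i, ∑ j, (A i j) ^ 2)

def fantope1 {p : ℕ} : Set (Matrix (Fin p) (Fin p) ℝ) :=
  {H | H.PosSemidef ∧ ((1 : Matrix (Fin p) (Fin p) ℝ) - H).PosSemidef ∧ H.trace = 1}

def deflatedFantope {p : ℕ} (P : Matrix (Fin p) (Fin p) ℝ) : Set (Matrix (Fin p) (Fin p) ℝ) :=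
  {H | H ∈ fantope1 ∧ frobInner H P = 0}

lemma conjT_real {m n : ℕ} (A : Matrix (Fin m) (Fin n) ℝ) : Aᴴ = Aᵀ := by
  ext i j; simp [Matrix.conjTranspose_apply]

lemma frobInner_eq_sum {p : ℕ} (A B : Matrix (Fin p) (Fin p) ℝ) :
    frobInner A B = ∑ i, ∑ j, A i j * B i j := by
  simp only [frobInner, Matrix.trace, Matrix.diag_apply, Matrix.mul_apply,
    Matrix.transpose_apply]
  exact Finset.sum_comm

lemma aux_sum_mulVec {q m : ℕ} (f : Fin q → Matrix (Fin m) (Fin m) ℝ) (x : Fin m → ℝ) :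
    (∑ i, f i) *ᵥ x = ∑ i, f i *ᵥ x := by
  ext k
  simp only [Matrix.mulVec, dotProduct, Matrix.sum_apply, Finset.sum_apply, Finset.sum_mul]
  exact Finset.sum_comm

lemma aux_dot_sum {q m : ℕ} (v : Fin m → ℝ) (w : Fin q → Fin m → ℝ) :
    v ⬝ᵥ (∑ i, w i) = ∑ i, v ⬝ᵥ w i := by
  simp only [dotProduct, Finset.sum_apply, Finset.mul_sum]
  exact Finset.sum_comm

lemma aux_vmv_mulVec {m : ℕ} (a b x : Fin m → ℝ) : vecMulVec a b *ᵥ x = (b ⬝ᵥ x) • a := by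
  ext i
  simp only [Matrix.mulVec, dotProduct, Matrix.vecMulVec_apply, Pi.smul_apply, smul_eq_mul,
    Finset.mul_sum]
  rw [Finset.sum_mul]
  exact Finset.sum_congr rfl fun k _ => by ring

lemma aux_trace_vmv_mul {m : ℕ} (a b : Fin m → ℝ) (N : Matrix (Fin m) (Fin m) ℝ) :
    (vecMulVec a b * N).trace = b ⬝ᵥ (N *ᵥ a) := by
  simp only [Matrix.trace, Matrix.diag_apply, Matrix.mul_apply, Matrix.vecMulVec_apply,
    dotProduct, Matrix.mulVec, Finset.mul_sum]
  rw [Finset.sum_comm]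
  refine Finset.sum_congr rfl fun k _ => Finset.sum_congr rfl fun j _ => by ring

lemma aux_trace_transpose_mul_self {m n : ℕ} (M : Matrix (Fin m) (Fin n) ℝ) :
    (Mᵀ * M).trace = ∑ j, ∑ i, (M i j)^2 := by
  simp [Matrix.trace, Matrix.diag_apply, Matrix.mul_apply, Matrix.transpose_apply, sq]

lemma aux_eq_zero_of_tr {m n : ℕ} (M : Matrix (Fin m) (Fin n) ℝ)
    (h : (Mᵀ * M).trace = 0) : M = 0 := by
  rw [aux_trace_transpose_mul_self] at h
  ext i j
  have h1 := (Finset.sum_eq_zero_iff_of_nonneg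
    (fun j _ => Finset.sum_nonneg fun i _ => sq_nonneg (M i j))).mp h j (Finset.mem_univ j)
  have h2 := (Finset.sum_eq_zero_iff_of_nonneg (fun i _ => sq_nonneg (M i j))).mp h1 i
    (Finset.mem_univ i)
  have h3 : M i j = 0 := by nlinarith [sq_nonneg (M i j)]
  simpa using h3

lemma clip_key {n : ℕ} (γ : Fin n → ℝ) (θ : ℝ) (x h : Fin n → ℝ)
    (hxdef : ∀ i, x i = min (max (γ i - θ) 0) 1)
    (hxsum : ∑ i, x i = 1)
    (hh0 : ∀ i, 0 ≤ h i) (hh1 : ∀ i, h i ≤ 1) (hhsum : ∑ i, h i = 1) :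
    ∑ i, (γ i - x i) * (h i - x i) ≤ 0 := by
  have key : ∀ i, (γ i - x i - θ) * (h i - x i) ≤ 0 := by
    intro i
    rcases le_or_gt (γ i - θ) 0 with hle | hgt
    · have hxi : x i = 0 := by rw [hxdef i, max_eq_right hle, min_eq_left zero_le_one]
      rw [hxi]
      have h1 : γ i - 0 - θ ≤ 0 := by linarith
      have h2 : 0 ≤ h i - 0 := by linarith [hh0 i]
      exact mul_nonpos_of_nonpos_of_nonneg h1 h2
    · rcases le_or_gt 1 (γ i - θ) with h1 | h1
      · have hxi : x i = 1 := by rw [hxdef i, max_eq_left (by linarith), min_eq_right h1]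
        rw [hxi]
        have h2 : 0 ≤ γ i - 1 - θ := by linarith
        have h3 : h i - 1 ≤ 0 := by linarith [hh1 i]
        exact mul_nonpos_of_nonneg_of_nonpos h2 h3
      · have hxi : x i = γ i - θ := by rw [hxdef i, max_eq_left hgt.le, min_eq_left h1.le]
        rw [hxi]
        have : γ i - (γ i - θ) - θ = 0 := by ring
        rw [this, zero_mul]
  have expand : ∑ i, (γ i - x i) * (h i - x i)
      = (∑ i, θ * (h i - x i)) + ∑ i, (γ i - x i - θ) * (h i - x i) := by
    rw [← Finset.sum_add_distrib]
    exact Finset.sum_congr rfl fun i _ => by ring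
  have hz : ∑ i, θ * (h i - x i) = 0 := by
    rw [← Finset.mul_sum, Finset.sum_sub_distrib, hhsum, hxsum]
    ring
  rw [expand, hz, zero_add]
  exact Finset.sum_nonpos fun i _ => key i

lemma theta_exists {n : ℕ} (hn : 0 < n) (γ : Fin n → ℝ) :
    ∃ θ : ℝ, ∑ i, min (max (γ i - θ) 0) 1 = 1 := by
  haveI : Nonempty (Fin n) := ⟨⟨0, hn⟩⟩
  set f : ℝ → ℝ := fun θ => ∑ i, min (max (γ i - θ) 0) 1 with hf
  have hcont : Continuous f := by
    apply continuous_finset_sum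
    intro i _
    exact ((continuous_const.sub continuous_id).max continuous_const).min continuous_const
  set a : ℝ := (Finset.univ.inf' Finset.univ_nonempty γ) - 1 with ha
  set b : ℝ := Finset.univ.sup' Finset.univ_nonempty γ with hb
  obtain ⟨i0⟩ : Nonempty (Fin n) := inferInstance
  have hab : a ≤ b := by
    have h1 := Finset.inf'_le γ (Finset.mem_univ i0)
    have h2 := Finset.le_sup' γ (Finset.mem_univ i0)
    simp only [ha, hb]
    linarith
  have hfa : f a = (n : ℝ) := by
    have h1 : ∀ i ∈ Finset.univ, min (max (γ i - a) 0) 1 = 1 := by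
      intro i _
      have h2 := Finset.inf'_le γ (Finset.mem_univ i)
      have h3 : 1 ≤ γ i - a := by simp only [ha]; linarith
      rw [max_eq_left (by linarith), min_eq_right h3]
    rw [hf]
    simp only
    rw [Finset.sum_congr rfl h1]
    simp
  have hfb : f b = 0 := by
    have h1 : ∀ i ∈ Finset.univ, min (max (γ i - b) 0) 1 = 0 := by
      intro i _
      have h2 := Finset.le_sup' γ (Finset.mem_univ i)
      have h3 : γ i - b ≤ 0 := by simp only [hb]; linarith
      rw [max_eq_right h3, min_eq_left zero_le_one]
    rw [hf]
    simp only
    rw [Finset.sum_congr rfl h1]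
    simp
  have h1mem : (1:ℝ) ∈ Set.Icc (f b) (f a) := by
    constructor
    · rw [hfb]; norm_num
    · rw [hfa]; exact_mod_cast hn
  obtain ⟨θ, _, hθ⟩ := intermediate_value_Icc' hab hcont.continuousOn h1mem
  exact ⟨θ, hθ⟩

lemma core {p d : ℕ} (hd : d < p)
    (A : Matrix (Fin p) (Fin p) ℝ) (hA : A.IsSymm)
    (V : Matrix (Fin p) (Fin d) ℝ) (hV : Vᵀ * V = 1)
    (U : Matrix (Fin p) (Fin (p - d)) ℝ) (hU : Uᵀ * U = 1) (hVU : Vᵀ * U = 0)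
    (γ : Fin (p - d) → ℝ) (η : Fin (p - d) → Fin (p - d) → ℝ)
    (hη : ∀ i j, (η i) ⬝ᵥ (η j) = if i = j then (1:ℝ) else 0)
    (hdecomp : Uᵀ * A * U = ∑ i, γ i • vecMulVec (η i) (η i))
    (x : Fin (p - d) → ℝ) (hx0 : ∀ i, 0 ≤ x i) (hx1 : ∀ i, x i ≤ 1)
    (hxsum : ∑ i, x i = 1)
    (hkey : ∀ h : Fin (p - d) → ℝ, (∀ i, 0 ≤ h i) → (∀ i, h i ≤ 1) → ∑ i, h i = 1 →
        ∑ i, (γ i - x i) * (h i - x i) ≤ 0) :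
    (U * (∑ i, x i • vecMulVec (η i) (η i)) * Uᵀ) ∈ deflatedFantope (V * Vᵀ) ∧
    ∀ B ∈ deflatedFantope (V * Vᵀ),
      frobNorm (A - U * (∑ i, x i • vecMulVec (η i) (η i)) * Uᵀ) ≤ frobNorm (A - B) ∧
      (frobNorm (A - B) = frobNorm (A - U * (∑ i, x i • vecMulVec (η i) (η i)) * Uᵀ)
        → B = U * (∑ i, x i • vecMulVec (η i) (η i)) * Uᵀ) := by
  set C : Matrix (Fin (p-d)) (Fin (p-d)) ℝ := ∑ i, x i • vecMulVec (η i) (η i) with hCdef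
  set X : Matrix (Fin p) (Fin p) ℝ := U * C * Uᵀ with hXdef
  -- basic transposes
  have hUV' : Uᵀ * V = 0 := by
    have h := congrArg Matrix.transpose hVU
    rwa [Matrix.transpose_mul, Matrix.transpose_transpose, Matrix.transpose_zero] at h
  -- completeness: V Vᵀ + U Uᵀ = 1
  have hVVUU : V * Vᵀ + U * Uᵀ = 1 := by
    have e : Fin p ≃ Fin d ⊕ Fin (p - d) :=
      (finCongr (Nat.add_sub_cancel' hd.le).symm).trans finSumFinEquiv.symm
    have h1 : (fromRows Vᵀ Uᵀ) * (fromCols V U) = 1 := by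
      rw [fromRows_mul_fromCols, hV, hU, hVU, hUV']
      exact fromBlocks_one
    have h2 : fromCols V U * fromRows Vᵀ Uᵀ = 1 :=
      (mul_eq_one_comm_of_equiv e).mpr h1
    rwa [fromCols_mul_fromRows] at h2
  -- rows η form an orthogonal matrix
  have hR : (Matrix.of η) * (Matrix.of η)ᵀ = 1 := by
    ext i j
    simp only [Matrix.mul_apply, Matrix.transpose_apply, Matrix.of_apply, Matrix.one_apply]
    simpa [dotProduct] using hη i j
  have hR' : (Matrix.of η)ᵀ * (Matrix.of η) = 1 := mul_eq_one_comm.mp hR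
  have sumEta : ∑ i, vecMulVec (η i) (η i) = (1 : Matrix (Fin (p-d)) (Fin (p-d)) ℝ) := by
    rw [← hR']
    ext j k
    simp [Matrix.sum_apply, Matrix.mul_apply, Matrix.vecMulVec_apply, Matrix.transpose_apply]
  -- quadratic form of weighted sums
  have hquad : ∀ (c : Fin (p-d) → ℝ) (y : Fin (p-d) → ℝ),
      y ⬝ᵥ ((∑ i, c i • vecMulVec (η i) (η i)) *ᵥ y) = ∑ i, c i * (η i ⬝ᵥ y)^2 := by
    intro c y
    rw [show (∑ i, c i • vecMulVec (η i) (η i)) *ᵥ y = ∑ i, (c i • vecMulVec (η i) (η i)) *ᵥ y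
        from aux_sum_mulVec _ y, aux_dot_sum]
    refine Finset.sum_congr rfl fun i _ => ?_
    rw [smul_mulVec, aux_vmv_mulVec, dotProduct_smul, dotProduct_smul, smul_eq_mul,
      smul_eq_mul, dotProduct_comm y (η i)]
    ring
  have hPSDsum : ∀ (c : Fin (p-d) → ℝ), (∀ i, 0 ≤ c i) →
      (∑ i, c i • vecMulVec (η i) (η i)).PosSemidef := by
    intro c hc
    rw [Matrix.posSemidef_iff_dotProduct_mulVec]
    constructor
    · rw [Matrix.IsHermitian, conjT_real]
      ext j k
      simp only [Matrix.transpose_apply, Matrix.sum_apply, Matrix.smul_apply,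
        Matrix.vecMulVec_apply, smul_eq_mul]
      exact Finset.sum_congr rfl fun i _ => by ring
    · intro y
      have hsy : star y = y := funext fun i => star_trivial _
      rw [hsy, hquad c y]
      exact Finset.sum_nonneg fun i _ => mul_nonneg (hc i) (sq_nonneg _)
  have hCpsd : C.PosSemidef := hPSDsum x hx0
  have hCsymm : Cᵀ = C := by rw [← conjT_real]; exact hCpsd.1
  have hXsymm : Xᵀ = X := by
    rw [hXdef, Matrix.transpose_mul, Matrix.transpose_mul, Matrix.transpose_transpose, hCsymm,
      Matrix.mul_assoc]
  have trace_vmv : ∀ (a b : Fin (p-d) → ℝ), (vecMulVec a b).trace = a ⬝ᵥ b := by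
    intro a b
    simp [Matrix.trace, Matrix.vecMulVec_apply, dotProduct, Matrix.diag]
  have htrC : C.trace = 1 := by
    rw [hCdef, Matrix.trace_sum]
    have : ∀ i ∈ Finset.univ, (x i • vecMulVec (η i) (η i)).trace = x i := by
      intro i _
      rw [Matrix.trace_smul, trace_vmv, hη, if_pos rfl, smul_eq_mul, mul_one]
    rw [Finset.sum_congr rfl this, hxsum]
  -- X ∈ deflatedFantope
  have hXpsd : X.PosSemidef := by
    have h := hCpsd.mul_mul_conjTranspose_same U
    rwa [conjT_real] at h
  have h1mC : (1 : Matrix (Fin (p-d)) (Fin (p-d)) ℝ) - C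
      = ∑ i, (1 - x i) • vecMulVec (η i) (η i) := by
    rw [eq_comm]
    calc ∑ i, (1 - x i) • vecMulVec (η i) (η i)
        = ∑ i, (vecMulVec (η i) (η i) - x i • vecMulVec (η i) (η i)) :=
          Finset.sum_congr rfl fun i _ => by rw [sub_smul, one_smul]
      _ = (∑ i, vecMulVec (η i) (η i)) - C := Finset.sum_sub_distrib _ _
      _ = 1 - C := by rw [sumEta]
  have h1Xpsd : ((1 : Matrix (Fin p) (Fin p) ℝ) - X).PosSemidef := by
    have hsplit : (1 : Matrix (Fin p) (Fin p) ℝ) - X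
        = V * (1 : Matrix (Fin d) (Fin d) ℝ) * Vᵀ + U * ((1 : Matrix (Fin (p-d)) (Fin (p-d)) ℝ) - C) * Uᵀ := by
      rw [Matrix.mul_one, Matrix.mul_sub, Matrix.mul_one, Matrix.sub_mul, hXdef, ← hVVUU]
      abel
    rw [hsplit]
    have hp1 : (V * (1 : Matrix (Fin d) (Fin d) ℝ) * Vᵀ).PosSemidef := by
      have h := (Matrix.PosSemidef.one
        (R := ℝ) (n := Fin d)).mul_mul_conjTranspose_same V
      rwa [conjT_real] at h
    have hp2 : (U * ((1 : Matrix (Fin (p-d)) (Fin (p-d)) ℝ) - C) * Uᵀ).PosSemidef := by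
      have hpsd : ((1 : Matrix (Fin (p-d)) (Fin (p-d)) ℝ) - C).PosSemidef := by
        rw [h1mC]
        exact hPSDsum _ (fun i => by linarith [hx1 i])
      have h := hpsd.mul_mul_conjTranspose_same U
      rwa [conjT_real] at h
    exact hp1.add hp2
  have htrX : X.trace = 1 := by
    rw [hXdef, Matrix.trace_mul_comm (U * C) Uᵀ, ← Matrix.mul_assoc, hU, Matrix.one_mul, htrC]
  have hXinner : frobInner X (V * Vᵀ) = 0 := by
    have hz : Xᵀ * (V * Vᵀ) = 0 := by
      rw [hXsymm, hXdef, Matrix.mul_assoc, Matrix.mul_assoc, ← Matrix.mul_assoc Uᵀ V Vᵀ,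
        hUV', Matrix.zero_mul, Matrix.mul_zero, Matrix.mul_zero]
    show (Xᵀ * (V * Vᵀ)).trace = 0
    rw [hz, Matrix.trace_zero]
  have hXmem : X ∈ deflatedFantope (V * Vᵀ) := ⟨⟨hXpsd, h1Xpsd, htrX⟩, hXinner⟩
  refine ⟨hXmem, ?_⟩
  intro B hB
  obtain ⟨⟨hBpsd, hB1, hBtr⟩, hBVV⟩ := hB
  have hBsymm : Bᵀ = B := by rw [← conjT_real]; exact hBpsd.1
  -- B V = 0
  have hBV : B * V = 0 := by
    obtain ⟨L, hL⟩ : ∃ L : Matrix (Fin p) (Fin p) ℝ, B = Lᴴ * L := by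
      open scoped MatrixOrder in
      obtain ⟨L, hL⟩ := CStarAlgebra.nonneg_iff_eq_star_mul_self.mp hBpsd.nonneg
      exact ⟨L, hL⟩
    rw [conjT_real] at hL
    have htr0 : ((L * V)ᵀ * (L * V)).trace = 0 := by
      have h1 : (L * V)ᵀ * (L * V) = Vᵀ * B * V := by
        rw [Matrix.transpose_mul, hL]
        simp only [Matrix.mul_assoc]
      rw [h1]
      have h2 : (Vᵀ * B * V).trace = frobInner B (V * Vᵀ) := by
        rw [frobInner, hBsymm, ← Matrix.mul_assoc, Matrix.trace_mul_comm (B * V) Vᵀ,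
          Matrix.mul_assoc]
      rw [h2, hBVV]
    have hLV : L * V = 0 := aux_eq_zero_of_tr _ htr0
    rw [hL, Matrix.mul_assoc, hLV, Matrix.mul_zero]
  have hVB : Vᵀ * B = 0 := by
    have h := congrArg Matrix.transpose hBV
    rwa [Matrix.transpose_mul, hBsymm, Matrix.transpose_zero] at h
  have hBdec : B = U * (Uᵀ * B * U) * Uᵀ := by
    have h0 : B = (V * Vᵀ + U * Uᵀ) * B * (V * Vᵀ + U * Uᵀ) := by
      rw [hVVUU, Matrix.one_mul, Matrix.mul_one]
    have e1 : (V * Vᵀ + U * Uᵀ) * B = U * (Uᵀ * B) := by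
      rw [Matrix.add_mul, Matrix.mul_assoc V Vᵀ B, hVB, Matrix.mul_zero, zero_add,
        Matrix.mul_assoc]
    have e2 : U * (Uᵀ * B) * (V * Vᵀ + U * Uᵀ) = U * (Uᵀ * B * U) * Uᵀ := by
      rw [Matrix.mul_add]
      have t1 : U * (Uᵀ * B) * (V * Vᵀ) = 0 := by
        rw [Matrix.mul_assoc, Matrix.mul_assoc, ← Matrix.mul_assoc B V Vᵀ, hBV,
          Matrix.zero_mul, Matrix.mul_zero, Matrix.mul_zero]
      rw [t1, zero_add]
      simp only [Matrix.mul_assoc]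
    conv_lhs => rw [h0]
    rw [e1, e2]
  -- the diagonal values h i
  set B' : Matrix (Fin (p-d)) (Fin (p-d)) ℝ := Uᵀ * B * U with hB'def
  set hfun : Fin (p-d) → ℝ := fun i => η i ⬝ᵥ (B' *ᵥ η i) with hfundef
  have hdotU : ∀ (w : Fin (p-d) → ℝ) (z : Fin p → ℝ), w ⬝ᵥ (Uᵀ *ᵥ z) = (U *ᵥ w) ⬝ᵥ z := by
    intro w z
    rw [dotProduct_mulVec, vecMul_transpose]
  have hB'mulvec : ∀ (w : Fin (p-d) → ℝ), B' *ᵥ w = Uᵀ *ᵥ (B *ᵥ (U *ᵥ w)) := by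
    intro w
    rw [Matrix.mulVec_mulVec, Matrix.mulVec_mulVec]
  have hUdot : ∀ w : Fin (p-d) → ℝ, (U *ᵥ w) ⬝ᵥ (U *ᵥ w) = w ⬝ᵥ w := by
    intro w
    rw [← hdotU, Matrix.mulVec_mulVec, hU, Matrix.one_mulVec]
  have hBq : ∀ v : Fin p → ℝ, 0 ≤ v ⬝ᵥ (B *ᵥ v) := by
    intro v
    have h := hBpsd.dotProduct_mulVec_nonneg v
    rwa [show star v = v from funext fun i => star_trivial _] at h
  have hh0 : ∀ i, 0 ≤ hfun i := by
    intro i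
    rw [hfundef]
    simp only
    rw [hB'mulvec, hdotU]
    exact hBq _
  have hh1 : ∀ i, hfun i ≤ 1 := by
    intro i
    have h := hB1.dotProduct_mulVec_nonneg (U *ᵥ η i)
    rw [show star (U *ᵥ η i) = U *ᵥ η i from funext fun _ => star_trivial _,
      Matrix.sub_mulVec, Matrix.one_mulVec, dotProduct_sub, hUdot, hη, if_pos rfl] at h
    have heq : (U *ᵥ η i) ⬝ᵥ (B *ᵥ (U *ᵥ η i)) = hfun i := by
      rw [hfundef]; simp only; rw [hB'mulvec, hdotU]
    rw [heq] at h
    linarith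
  have hhsum : ∑ i, hfun i = 1 := by
    have h1 : ∀ i, hfun i = (vecMulVec (η i) (η i) * B').trace := by
      intro i; rw [aux_trace_vmv_mul, hfundef]
    have h2 : ∑ i, hfun i = ((∑ i, vecMulVec (η i) (η i)) * B').trace := by
      rw [Finset.sum_mul, Matrix.trace_sum]
      exact Finset.sum_congr rfl fun i _ => h1 i
    rw [h2, sumEta, Matrix.one_mul, hB'def]
    have h3 : (Uᵀ * B * U).trace = (B * (U * Uᵀ)).trace := by
      rw [Matrix.mul_assoc, Matrix.trace_mul_comm Uᵀ (B * U), Matrix.mul_assoc]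
    have h4 : B * (U * Uᵀ) = B := by
      have h5 : U * Uᵀ = 1 - V * Vᵀ := by rw [← hVVUU]; abel
      rw [h5, Matrix.mul_sub, Matrix.mul_one, ← Matrix.mul_assoc, hBV, Matrix.zero_mul,
        sub_zero]
    rw [h3, h4, hBtr]
  -- dot with C
  have hCdot : ∀ i, η i ⬝ᵥ (C *ᵥ η i) = x i := by
    intro i
    rw [hCdef, show (∑ j, x j • vecMulVec (η j) (η j)) *ᵥ η i
        = ∑ j, (x j • vecMulVec (η j) (η j)) *ᵥ η i from aux_sum_mulVec _ _, aux_dot_sum]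
    have h1 : ∀ j, η i ⬝ᵥ ((x j • vecMulVec (η j) (η j)) *ᵥ η i)
        = x j * ((if j = i then (1:ℝ) else 0) * (if i = j then (1:ℝ) else 0)) := by
      intro j
      rw [smul_mulVec, aux_vmv_mulVec, dotProduct_smul, dotProduct_smul, smul_eq_mul,
        smul_eq_mul, ← hη j i, ← hη i j]
    rw [Finset.sum_congr rfl fun j _ => h1 j, Finset.sum_eq_single i]
    · simp
    · intro j _ hj
      rw [if_neg hj, zero_mul, mul_zero]
    · intro h; exact absurd (Finset.mem_univ i) h
  -- the key inner-product identity
  have hinner : frobInner (A - X) (B - X) = ∑ i, (γ i - x i) * (hfun i - x i) := by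
    have hBX : B - X = U * (B' - C) * Uᵀ := by
      rw [Matrix.mul_sub, Matrix.sub_mul, ← hXdef, ← hBdec]
    have hAXt : (A - X)ᵀ = A - X := by rw [Matrix.transpose_sub, hA.eq, hXsymm]
    have hUXU : Uᵀ * X * U = C := by
      rw [hXdef]
      rw [show Uᵀ * (U * C * Uᵀ) * U = (Uᵀ * U) * C * (Uᵀ * U) by
        simp only [Matrix.mul_assoc], hU, Matrix.one_mul, Matrix.mul_one]
    have hMC : Uᵀ * (A - X) * U = ∑ i, (γ i - x i) • vecMulVec (η i) (η i) := by
      rw [Matrix.mul_sub, Matrix.sub_mul, hdecomp, hUXU, hCdef, ← Finset.sum_sub_distrib]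
      exact Finset.sum_congr rfl fun i _ => by rw [sub_smul]
    calc frobInner (A - X) (B - X)
        = ((A - X) * (U * (B' - C) * Uᵀ)).trace := by rw [frobInner, hAXt, hBX]
      _ = ((Uᵀ * (A - X) * U) * (B' - C)).trace := by
          rw [show (A - X) * (U * (B' - C) * Uᵀ) = ((A - X) * (U * (B' - C))) * Uᵀ by
            simp only [Matrix.mul_assoc], Matrix.trace_mul_comm]
          simp only [Matrix.mul_assoc]
      _ = ∑ i, (γ i - x i) * (hfun i - x i) := by
          rw [hMC, Finset.sum_mul, Matrix.trace_sum]
          refine Finset.sum_congr rfl fun i _ => ?_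
          rw [Matrix.smul_mul, Matrix.trace_smul, aux_trace_vmv_mul, smul_eq_mul,
            Matrix.sub_mulVec, dotProduct_sub, hCdot, hfundef]
  have hineq : frobInner (A - X) (B - X) ≤ 0 := by
    rw [hinner]
    exact hkey hfun hh0 hh1 hhsum
  -- norm comparison
  have hsq : (∑ i, ∑ j, ((A - B) i j)^2)
      = ((∑ i, ∑ j, ((A - X) i j)^2) + (∑ i, ∑ j, ((X - B) i j)^2))
        - 2 * (∑ i, ∑ j, (A - X) i j * (B - X) i j) := by
    rw [Finset.mul_sum, ← Finset.sum_add_distrib, ← Finset.sum_sub_distrib]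
    refine Finset.sum_congr rfl fun i _ => ?_
    rw [Finset.mul_sum, ← Finset.sum_add_distrib, ← Finset.sum_sub_distrib]
    refine Finset.sum_congr rfl fun j _ => ?_
    simp only [Matrix.sub_apply]
    ring
  have hcross : (∑ i, ∑ j, (A - X) i j * (B - X) i j) ≤ 0 := by
    rw [← frobInner_eq_sum]
    exact hineq
  have hnnXB : 0 ≤ ∑ i, ∑ j, ((X - B) i j)^2 :=
    Finset.sum_nonneg fun i _ => Finset.sum_nonneg fun j _ => sq_nonneg _
  have hle : (∑ i, ∑ j, ((A - X) i j)^2) ≤ (∑ i, ∑ j, ((A - B) i j)^2) := by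
    rw [hsq]; linarith
  constructor
  · exact Real.sqrt_le_sqrt hle
  · intro heq
    have hnnAX : 0 ≤ ∑ i, ∑ j, ((A - X) i j)^2 :=
      Finset.sum_nonneg fun i _ => Finset.sum_nonneg fun j _ => sq_nonneg _
    have hnnAB : 0 ≤ ∑ i, ∑ j, ((A - B) i j)^2 :=
      Finset.sum_nonneg fun i _ => Finset.sum_nonneg fun j _ => sq_nonneg _
    have h1 : (∑ i, ∑ j, ((A - B) i j)^2) = (∑ i, ∑ j, ((A - X) i j)^2) :=
      (Real.sqrt_inj hnnAB hnnAX).mp heq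
    have h0 : (∑ i, ∑ j, ((X - B) i j)^2) = 0 := by
      rw [h1] at hsq
      linarith
    have hXB : X - B = 0 := by
      ext i j
      have hz1 := (Finset.sum_eq_zero_iff_of_nonneg
        (fun i _ => Finset.sum_nonneg fun j _ => sq_nonneg ((X - B) i j))).mp h0 i
        (Finset.mem_univ i)
      have hz2 := (Finset.sum_eq_zero_iff_of_nonneg
        (fun j _ => sq_nonneg ((X - B) i j))).mp hz1 j (Finset.mem_univ j)
      have : (X - B) i j = 0 := pow_eq_zero_iff two_ne_zero |>.mp hz2
      simpa using this
    have : B = X := by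
      have := sub_eq_zero.mp hXB
      exact this.symm
    rw [this, hXdef]

/-- closed form of the Frobenius projection onto the deflated Fantope.
With A symmetric, Π = VVᵀ for V with orthonormal columns, U an orthonormal basis of the
orthogonal complement of col(V), and UᵀAU = Σ γ_i η_i η_iᵀ an orthonormal eigendecomposition,
there is θ with Σ_i min(max(γ_i − θ,0),1) = 1 and U[Σ_i γ_i⁺(θ) η_i η_iᵀ]Uᵀ is the unique
minimizer of ‖A − B‖_F over B ∈ D_Π. -/
theorem stmt2 {p d : ℕ} (hd : d < p)
    (A : Matrix (Fin p) (Fin p) ℝ) (hA : A.IsSymm)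
    (V : Matrix (Fin p) (Fin d) ℝ) (hV : Vᵀ * V = 1)
    (U : Matrix (Fin p) (Fin (p - d)) ℝ) (hU : Uᵀ * U = 1) (hVU : Vᵀ * U = 0)
    (γ : Fin (p - d) → ℝ) (η : Fin (p - d) → Fin (p - d) → ℝ)
    (hη : ∀ i j, (η i) ⬝ᵥ (η j) = if i = j then (1:ℝ) else 0)
    (hdecomp : Uᵀ * A * U = ∑ i, γ i • vecMulVec (η i) (η i)) :
    ∃ θ : ℝ, (∑ i, min (max (γ i - θ) 0) 1) = 1 ∧
      (U * (∑ i, (min (max (γ i - θ) 0) 1) • vecMulVec (η i) (η i)) * Uᵀ)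
          ∈ deflatedFantope (V * Vᵀ) ∧
      ∀ B ∈ deflatedFantope (V * Vᵀ),
        frobNorm (A - U * (∑ i, (min (max (γ i - θ) 0) 1) • vecMulVec (η i) (η i)) * Uᵀ)
            ≤ frobNorm (A - B) ∧
        (frobNorm (A - B)
            = frobNorm (A - U * (∑ i, (min (max (γ i - θ) 0) 1) • vecMulVec (η i) (η i)) * Uᵀ)
          → B = U * (∑ i, (min (max (γ i - θ) 0) 1) • vecMulVec (η i) (η i)) * Uᵀ) := by
  obtain ⟨θ, hθ⟩ := theta_exists (Nat.sub_pos_of_lt hd) γ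
  have hx0 : ∀ i, 0 ≤ min (max (γ i - θ) 0) 1 := fun i => le_min (le_max_right _ _) zero_le_one
  have hx1 : ∀ i, min (max (γ i - θ) 0) 1 ≤ 1 := fun i => min_le_right _ _
  have hcore := core hd A hA V hV U hU hVU γ η hη hdecomp
    (fun i => min (max (γ i - θ) 0) 1) hx0 hx1 hθ
    (fun h hh0 hh1 hhsum => clip_key γ θ _ h (fun i => rfl) hθ hh0 hh1 hhsum)
  exact ⟨θ, hθ, hcore.1, hcore.2⟩
end

section
/- Let u and v be unit vectors in ℝ^p. Then ‖uuᵀ − vvᵀ‖_F ≤ √2·‖u − v‖₂; and if in addition ⟨u, v⟩ ≥ 0, then (1/√2)·‖u − v‖₂ ≤ ‖uuᵀ − vvᵀ‖_F. -/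
open Matrix Finset

noncomputable def l2norm {p : ℕ} (v : Fin p → ℝ) : ℝ := Real.sqrt (∑ i, (v i) ^ 2)

/-- For unit vectors u, v in ℝ^p, ‖uuᵀ − vvᵀ‖_F ≤ √2·‖u − v‖₂, and if
⟨u,v⟩ ≥ 0 then (1/√2)·‖u − v‖₂ ≤ ‖uuᵀ − vvᵀ‖_F. -/
theorem stmt7 {p : ℕ} (u v : Fin p → ℝ) (hu : l2norm u = 1) (hv : l2norm v = 1) :
    frobNorm (vecMulVec u u - vecMulVec v v) ≤ Real.sqrt 2 * l2norm (u - v) ∧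
    ((0:ℝ) ≤ u ⬝ᵥ v →
      (1 / Real.sqrt 2) * l2norm (u - v) ≤ frobNorm (vecMulVec u u - vecMulVec v v)) := by
  set t : ℝ := u ⬝ᵥ v with ht
  have hu2 : ∑ i, (u i) ^ 2 = 1 := by
    have := hu; rw [l2norm, Real.sqrt_eq_one] at this; exact this
  have hv2 : ∑ i, (v i) ^ 2 = 1 := by
    have := hv; rw [l2norm, Real.sqrt_eq_one] at this; exact this
  have htdef : t = ∑ i, u i * v i := rfl
  have ht2 : t ^ 2 ≤ 1 := by
    have h := Finset.sum_mul_sq_le_sq_mul_sq Finset.univ u v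
    rw [hu2, hv2, ← htdef] at h
    simpa using h
  have hfrob : ∑ i, ∑ j, ((vecMulVec u u - vecMulVec v v) i j) ^ 2 = 2 - 2 * t ^ 2 := by
    have step : ∀ i : Fin p, ∑ j, ((vecMulVec u u - vecMulVec v v) i j) ^ 2
        = (u i)^2 * (∑ j, (u j)^2) - 2 * (u i * v i) * (∑ j, u j * v j)
          + (v i)^2 * (∑ j, (v j)^2) := by
      intro i
      rw [Finset.mul_sum, Finset.mul_sum, Finset.mul_sum, ← Finset.sum_sub_distrib,
        ← Finset.sum_add_distrib]
      refine Finset.sum_congr rfl fun j _ => ?_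
      simp [vecMulVec_apply, Matrix.sub_apply]
      ring
    calc ∑ i, ∑ j, ((vecMulVec u u - vecMulVec v v) i j) ^ 2
        = ∑ i, ((u i)^2 * (∑ j, (u j)^2) - 2 * (u i * v i) * (∑ j, u j * v j)
          + (v i)^2 * (∑ j, (v j)^2)) := Finset.sum_congr rfl fun i _ => step i
      _ = 2 - 2 * t ^ 2 := by
          rw [hu2, hv2, ← htdef]
          rw [Finset.sum_add_distrib, Finset.sum_sub_distrib]
          simp only [mul_one]
          rw [hu2, hv2, ← Finset.sum_mul]
          rw [show (∑ i, 2 * (u i * v i)) = 2 * ∑ i, u i * v i from by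
            rw [Finset.mul_sum], ← htdef]
          ring
  have hdist : ∑ i, ((u - v) i) ^ 2 = 2 - 2 * t := by
    have : ∀ i : Fin p, ((u - v) i) ^ 2 = (u i)^2 + (v i)^2 - 2 * (u i * v i) := by
      intro i; simp [Pi.sub_apply]; ring
    rw [Finset.sum_congr rfl fun i _ => this i, Finset.sum_sub_distrib,
      Finset.sum_add_distrib, hu2, hv2, show (∑ i, 2 * (u i * v i)) = 2 * ∑ i, u i * v i
        from by rw [Finset.mul_sum], ← htdef]
    ring
  have hF : frobNorm (vecMulVec u u - vecMulVec v v) = Real.sqrt (2 - 2 * t ^ 2) := by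
    rw [frobNorm, hfrob]
  have hL : l2norm (u - v) = Real.sqrt (2 - 2 * t) := by rw [l2norm, hdist]
  constructor
  · rw [hF, hL, ← Real.sqrt_mul (by norm_num : (2:ℝ) ≥ 0)]
    apply Real.sqrt_le_sqrt; nlinarith [sq_nonneg (1 - t)]
  · intro htpos
    rw [hF, hL, one_div, ← Real.sqrt_inv, ← Real.sqrt_mul (by positivity)]
    apply Real.sqrt_le_sqrt
    have h1 : t ≤ 1 := by nlinarith
    nlinarith
end

section
/- Let δ, c₀, c₂ > 0. Let M be a p×p real symmetric matrix with ‖M‖_F ≤ c₂p, whose largest eigenvalue exceeds its second-largest eigenvalue by at least pδ/2, and let v be a unit eigenvector of M for its largest eigenvalue. Let u be a unit vector with ‖uuᵀ − vvᵀ‖_F ≤ √2·c₀/p. Then for all p sufficiently large (depending only on δ, c₀, c₂), every H ∈ F¹ satisfies (pδ/8)·‖H − uuᵀ‖_F² − (3/2)c₀c₂ ≤ ⟨−M, H − uuᵀ⟩. -/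
open Matrix Finset

lemma psd_quad {p : ℕ} {H : Matrix (Fin p) (Fin p) ℝ} (hH : H.PosSemidef) (x : Fin p → ℝ) :
    0 ≤ x ⬝ᵥ (H *ᵥ x) := by
  simpa using hH.re_dotProduct_nonneg x

lemma herm_symm {p : ℕ} {S : Matrix (Fin p) (Fin p) ℝ} (h : S.IsHermitian) (a b : Fin p) :
    S a b = S b a := by
  conv_lhs => rw [← h]
  simp [Matrix.conjTranspose_apply]

open scoped MatrixOrder in
lemma trace_mul_nonneg' {p : ℕ} {B H : Matrix (Fin p) (Fin p) ℝ} (hH : H.PosSemidef)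
    (hB : ∀ w : Fin p → ℝ, 0 ≤ w ⬝ᵥ (B *ᵥ w)) : 0 ≤ (B * H).trace := by
  set S := CFC.sqrt H with hS
  have hsymm := herm_symm (CFC.sqrt_nonneg H).posSemidef.1
  have h1 : B * H = B * S * S := by rw [Matrix.mul_assoc, CFC.sqrt_mul_sqrt_self H hH.nonneg]
  rw [h1, Matrix.trace_mul_cycle]
  rw [Matrix.trace]
  apply Finset.sum_nonneg
  intro i _
  have h := hB (fun j => S i j)
  simp only [Matrix.diag_apply, Matrix.mul_apply, dotProduct, Matrix.mulVec] at h ⊢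
  calc (0:ℝ) ≤ ∑ k, S i k * ∑ j, B k j * S i j := h
    _ = ∑ j, (∑ k, S i k * B k j) * S j i := by
        simp_rw [Finset.mul_sum, Finset.sum_mul]
        rw [Finset.sum_comm]
        apply Finset.sum_congr rfl; intro j _
        apply Finset.sum_congr rfl; intro k _
        rw [show S j i = S i j from hsymm j i]; ring

lemma trace_mul_eq_sum {p : ℕ} (A B : Matrix (Fin p) (Fin p) ℝ) :
    (A * B).trace = ∑ i, ∑ j, A i j * B j i := by
  simp only [Matrix.trace, Matrix.diag_apply, Matrix.mul_apply]

lemma frobNorm_sq {a b : ℕ} (A : Matrix (Fin a) (Fin b) ℝ) :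
    frobNorm A ^ 2 = ∑ i, ∑ j, (A i j) ^ 2 := by
  rw [frobNorm, Real.sq_sqrt]
  positivity

lemma frobNorm_nonneg {a b : ℕ} (A : Matrix (Fin a) (Fin b) ℝ) : 0 ≤ frobNorm A :=
  Real.sqrt_nonneg _

lemma abs_frobInner_le {p : ℕ} (A B : Matrix (Fin p) (Fin p) ℝ) :
    |frobInner A B| ≤ frobNorm A * frobNorm B := by
  rw [frobInner_eq_sum, frobNorm, frobNorm, ← Real.sqrt_mul (by positivity),
    ← Real.sqrt_sq_eq_abs]
  apply Real.sqrt_le_sqrt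
  have key := Finset.sum_mul_sq_le_sq_mul_sq Finset.univ
    (fun x : Fin p × Fin p => A x.1 x.2) (fun x : Fin p × Fin p => B x.1 x.2)
  simp only [Fintype.sum_prod_type] at key
  exact key

set_option maxHeartbeats 1000000 in
/-- approximate curvature: for p sufficiently large (depending only on
δ, c₀, c₂), if M is symmetric with ‖M‖_F ≤ c₂p, its top eigenvalue μ (with unit eigenvector v)
exceeds its second-largest eigenvalue by at least pδ/2, and u is a unit vector with
‖uuᵀ − vvᵀ‖_F ≤ √2 c₀/p, then every H ∈ F¹ satisfies
(pδ/8)‖H − uuᵀ‖_F² − (3/2)c₀c₂ ≤ ⟨−M, H − uuᵀ⟩. -/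
theorem stmt8 (δ c₀ c₂ : ℝ) (hδ : 0 < δ) (hc₀ : 0 < c₀) (hc₂ : 0 < c₂) :
    ∃ P₀ : ℕ, ∀ p : ℕ, P₀ ≤ p →
      ∀ M : Matrix (Fin p) (Fin p) ℝ, M.IsSymm → frobNorm M ≤ c₂ * p →
      ∀ (μ : ℝ) (v : Fin p → ℝ), l2norm v = 1 → M *ᵥ v = μ • v →
        (∀ w : Fin p → ℝ, w ⬝ᵥ (M *ᵥ w) ≤ μ * (w ⬝ᵥ w)) →
        (∀ w : Fin p → ℝ, w ⬝ᵥ v = 0 → w ⬝ᵥ (M *ᵥ w) ≤ (μ - p * δ / 2) * (w ⬝ᵥ w)) →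
      ∀ u : Fin p → ℝ, l2norm u = 1 →
        frobNorm (vecMulVec u u - vecMulVec v v) ≤ Real.sqrt 2 * c₀ / p →
      ∀ H ∈ fantope1 (p := p),
        (p : ℝ) * δ / 8 * frobNorm (H - vecMulVec u u) ^ 2 - 3 / 2 * c₀ * c₂ ≤
          frobInner (-M) (H - vecMulVec u u) := by
  refine ⟨⌈8*δ*c₀/c₂⌉₊ + 1, ?_⟩
  intro p hp M hMs hMnorm μ v hv1 hMv _htop hgap u hu1 huv H hH
  obtain ⟨hHpsd, hIH, hHtr⟩ := hH
  have hp1 : 1 ≤ p := le_trans (Nat.le_add_left 1 _) hp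
  have hP : (0:ℝ) < p := by exact_mod_cast Nat.lt_of_lt_of_le Nat.zero_lt_one hp1
  have hPc : 8*δ*c₀ ≤ p * c₂ := by
    have h1 : 8*δ*c₀/c₂ ≤ (⌈8*δ*c₀/c₂⌉₊ : ℝ) := Nat.le_ceil _
    have h2 : ((⌈8*δ*c₀/c₂⌉₊ : ℕ) : ℝ) ≤ (p:ℝ) := by
      exact_mod_cast le_trans (Nat.le_succ _) hp
    rw [div_le_iff₀ hc₂] at h1
    calc 8*δ*c₀ ≤ (⌈8*δ*c₀/c₂⌉₊ : ℝ) * c₂ := h1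
      _ ≤ p * c₂ := by nlinarith
  -- normalizations
  have hvsum : ∑ i, v i ^ 2 = 1 := by
    have h := Real.sq_sqrt (show (0:ℝ) ≤ ∑ i, v i ^ 2 by positivity)
    rw [show Real.sqrt (∑ i, v i ^ 2) = l2norm v from rfl, hv1] at h
    linarith [h]
  have hv2 : v ⬝ᵥ v = 1 := by
    simpa [dotProduct, pow_two] using hvsum
  have hMsym : ∀ a b, M a b = M b a := fun a b => congrFun (congrFun hMs b) a
  have hHsym : ∀ a b, H a b = H b a := herm_symm hHpsd.1
  set t := v ⬝ᵥ (H *ᵥ v) with ht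
  have ht0 : 0 ≤ t := psd_quad hHpsd v
  have ht1 : t ≤ 1 := by
    have h := psd_quad hIH v
    rw [Matrix.sub_mulVec, Matrix.one_mulVec, dotProduct_sub, hv2] at h
    linarith
  have hvvt : ∀ w : Fin p → ℝ, vecMulVec v v *ᵥ w = (v ⬝ᵥ w) • v := by
    intro w
    ext i
    simp only [Matrix.mulVec, Matrix.vecMulVec_apply, dotProduct, Pi.smul_apply, smul_eq_mul,
      Finset.sum_mul, Finset.mul_sum]
    exact Finset.sum_congr rfl fun j _ => by ring
  set lam := μ - (p:ℝ) * δ / 2 with hlam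
  set B := μ • (vecMulVec v v) + lam • ((1 : Matrix (Fin p) (Fin p) ℝ) - vecMulVec v v) - M
    with hB
  have hBpsd : ∀ w : Fin p → ℝ, 0 ≤ w ⬝ᵥ (B *ᵥ w) := by
    intro w
    set s := w ⬝ᵥ v with hs
    set w' := w - s • v with hw'
    have hw'v : w' ⬝ᵥ v = 0 := by
      rw [hw', sub_dotProduct, smul_dotProduct, hv2, smul_eq_mul, mul_one, ← hs, sub_self]
    have hvw' : v ⬝ᵥ w' = 0 := by rw [dotProduct_comm]; exact hw'v
    have hw : w = w' + s • v := by rw [hw', sub_add_cancel]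
    have hvM : v ᵥ* M = μ • v := by rw [← Matrix.mulVec_transpose, hMs, hMv]
    have hMw' : v ⬝ᵥ (M *ᵥ w') = 0 := by
      rw [Matrix.dotProduct_mulVec, hvM, smul_dotProduct, hvw', smul_eq_mul, mul_zero]
    have hw'Mv : w' ⬝ᵥ (M *ᵥ v) = 0 := by
      rw [hMv, dotProduct_smul, hw'v, smul_eq_mul, mul_zero]
    have hwMw : w ⬝ᵥ (M *ᵥ w) = w' ⬝ᵥ (M *ᵥ w') + μ * s^2 := by
      conv_lhs => rw [hw]
      simp only [Matrix.mulVec_add, Matrix.mulVec_smul, hMv, add_dotProduct, dotProduct_add,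
        dotProduct_smul, smul_dotProduct, smul_eq_mul, hMw', hw'Mv, hvw', hw'v, hv2,
        smul_smul, smul_zero, mul_zero, mul_one, add_zero, zero_add]
      ring
    have hww : w ⬝ᵥ w = w' ⬝ᵥ w' + s^2 := by
      conv_lhs => rw [hw]
      simp only [add_dotProduct, dotProduct_add, dotProduct_smul, smul_dotProduct,
        smul_eq_mul, hw'v, hvw', hv2, smul_smul, smul_zero, mul_zero, mul_one,
        add_zero, zero_add]
      ring
    have hvvtw : w ⬝ᵥ (vecMulVec v v *ᵥ w) = s^2 := by
      rw [hvvt w, dotProduct_smul, smul_eq_mul, ← hs, dotProduct_comm v w, ← hs]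
      ring
    have hBw : w ⬝ᵥ (B *ᵥ w) = μ*s^2 + lam*((w ⬝ᵥ w) - s^2) - w ⬝ᵥ (M *ᵥ w) := by
      rw [hB]
      simp only [Matrix.sub_mulVec, Matrix.add_mulVec, Matrix.smul_mulVec,
        Matrix.one_mulVec, dotProduct_sub, dotProduct_add, dotProduct_smul, smul_eq_mul,
        hvvtw]
    have hgap' := hgap w' hw'v
    rw [hBw, hwMw, hww]
    nlinarith [hgap']
  -- trace inequalities
  have htrB := trace_mul_nonneg' hHpsd hBpsd
  have htrv : (vecMulVec v v * H).trace = t := by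
    rw [trace_mul_eq_sum, ht]
    simp only [Matrix.vecMulVec_apply, dotProduct, Matrix.mulVec]
    apply Finset.sum_congr rfl; intro i _
    rw [Finset.mul_sum]
    apply Finset.sum_congr rfl; intro j _
    rw [show H j i = H i j from hHsym j i]; ring
  have htrexp : (B * H).trace = μ*t + lam*(1-t) - (M*H).trace := by
    rw [hB]
    simp only [Matrix.sub_mul, Matrix.add_mul, Matrix.smul_mul, Matrix.one_mul,
      Matrix.trace_sub, Matrix.trace_add, Matrix.trace_smul, smul_eq_mul, hHtr, htrv]
  have key1 : (M*H).trace ≤ μ*t + lam*(1-t) := by rw [htrexp] at htrB; linarith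
  -- trace (H*H) ≤ 1
  have hqsum : (H*H).trace = ∑ i, ∑ j, H i j ^ 2 := by
    rw [trace_mul_eq_sum]
    apply Finset.sum_congr rfl; intro i _
    apply Finset.sum_congr rfl; intro j _
    rw [show H j i = H i j from hHsym j i]; ring
  have hq1 : (H*H).trace ≤ 1 := by
    have h0 := trace_mul_nonneg' hHpsd (fun w => psd_quad hIH w)
    have h1 : (((1 : Matrix (Fin p) (Fin p) ℝ) - H) * H).trace = 1 - (H*H).trace := by
      rw [Matrix.sub_mul, Matrix.one_mul, Matrix.trace_sub, hHtr]
    linarith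
  -- expansion of the norm
  have htsum : t = ∑ i, v i * ∑ j, H i j * v j := rfl
  have hA2 : frobNorm (H - vecMulVec v v) ^ 2 = (H*H).trace - 2*t + 1 := by
    rw [frobNorm_sq, hqsum, htsum]
    simp only [Matrix.sub_apply, Matrix.vecMulVec_apply]
    have h1 : ∀ i : Fin p, ∑ j, (H i j - v i * v j)^2
        = (∑ j, H i j^2) - 2*(v i * ∑ j, H i j * v j) + v i^2 * (∑ j, v j ^ 2) := by
      intro i
      rw [Finset.mul_sum, Finset.mul_sum, Finset.mul_sum]
      rw [← Finset.sum_sub_distrib, ← Finset.sum_add_distrib]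
      apply Finset.sum_congr rfl; intro j _; ring
    simp_rw [h1, hvsum, mul_one]
    rw [Finset.sum_add_distrib, Finset.sum_sub_distrib, ← Finset.mul_sum, hvsum]
  have hA2le : frobNorm (H - vecMulVec v v) ^ 2 ≤ 2*(1-t) := by
    rw [hA2]; linarith
  -- frobInner (-M) (H - vvᵀ)
  have hMvv : v ⬝ᵥ (M *ᵥ v) = μ := by
    rw [hMv, dotProduct_smul, hv2, smul_eq_mul, mul_one]
  have htrMv : (M * vecMulVec v v).trace = μ := by
    rw [trace_mul_eq_sum, ← hMvv]
    simp only [Matrix.vecMulVec_apply, dotProduct, Matrix.mulVec]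
    apply Finset.sum_congr rfl; intro i _
    rw [Finset.mul_sum]
    apply Finset.sum_congr rfl; intro j _; ring
  have hfi : frobInner (-M) (H - vecMulVec v v) = μ - (M*H).trace := by
    rw [frobInner, Matrix.transpose_neg, hMs, Matrix.neg_mul, Matrix.mul_sub,
      Matrix.trace_neg, Matrix.trace_sub, htrMv]
    ring
  have key2 : (p:ℝ)*δ/4 * frobNorm (H - vecMulVec v v)^2
      ≤ frobInner (-M) (H - vecMulVec v v) := by
    rw [hfi]
    have hfl : (p:ℝ)*δ/2*(1-t) ≤ μ - (M*H).trace := by rw [hlam] at key1; nlinarith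
    nlinarith [mul_le_mul_of_nonneg_left hA2le (show (0:ℝ) ≤ (p:ℝ)*δ/4 by positivity)]
  -- cross term
  have hsplit : frobInner (-M) (H - vecMulVec u u)
      = frobInner (-M) (H - vecMulVec v v)
        + frobInner (-M) (vecMulVec v v - vecMulVec u u) := by
    simp only [frobInner_eq_sum, Matrix.sub_apply]
    rw [← Finset.sum_add_distrib]
    apply Finset.sum_congr rfl; intro i _
    rw [← Finset.sum_add_distrib]
    apply Finset.sum_congr rfl; intro j _; ring
  have hnormneg : frobNorm (-M) = frobNorm M := by
    simp only [frobNorm, Matrix.neg_apply, neg_sq]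
  have hvu : frobNorm (vecMulVec v v - vecMulVec u u)
      = frobNorm (vecMulVec u u - vecMulVec v v) := by
    simp only [frobNorm]
    congr 1
    apply Finset.sum_congr rfl; intro i _
    apply Finset.sum_congr rfl; intro j _
    rw [Matrix.sub_apply, Matrix.sub_apply]; ring
  have hX2 : -(Real.sqrt 2 * c₀ * c₂)
      ≤ frobInner (-M) (vecMulVec v v - vecMulVec u u) := by
    have h1 := abs_frobInner_le (-M) (vecMulVec v v - vecMulVec u u)
    rw [hnormneg, hvu] at h1
    have h2 : frobNorm M * frobNorm (vecMulVec u u - vecMulVec v v)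
        ≤ (c₂ * p) * (Real.sqrt 2 * c₀ / p) := by
      apply mul_le_mul hMnorm huv (frobNorm_nonneg _)
      positivity
    have h3 : (c₂ * (p:ℝ)) * (Real.sqrt 2 * c₀ / p) = Real.sqrt 2 * c₀ * c₂ := by
      field_simp
    have h4 := neg_abs_le (frobInner (-M) (vecMulVec v v - vecMulVec u u))
    linarith
  -- norm comparison
  have hNle : frobNorm (H - vecMulVec u u)^2
      ≤ 2*frobNorm (H - vecMulVec v v)^2
        + 2*frobNorm (vecMulVec u u - vecMulVec v v)^2 := by
    simp only [frobNorm_sq]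
    calc ∑ i, ∑ j, ((H - vecMulVec u u) i j)^2
        ≤ ∑ i, ∑ j, (2*((H - vecMulVec v v) i j)^2
            + 2*((vecMulVec u u - vecMulVec v v) i j)^2) := by
          apply Finset.sum_le_sum; intro i _
          apply Finset.sum_le_sum; intro j _
          simp only [Matrix.sub_apply]
          nlinarith [sq_nonneg (H i j - vecMulVec v v i j
            + (vecMulVec u u i j - vecMulVec v v i j)),
            sq_nonneg (H i j - vecMulVec v v i j - (vecMulVec u u i j - vecMulVec v v i j))]
      _ = 2*(∑ i, ∑ j, ((H - vecMulVec v v) i j)^2)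
            + 2*(∑ i, ∑ j, ((vecMulVec u u - vecMulVec v v) i j)^2) := by
          simp only [Finset.sum_add_distrib, ← Finset.mul_sum]
  have hW2 : frobNorm (vecMulVec u u - vecMulVec v v)^2 ≤ 2*c₀^2/(p:ℝ)^2 := by
    have hw0 := frobNorm_nonneg (vecMulVec u u - vecMulVec v v)
    have heq : (Real.sqrt 2 * c₀ / p)^2 = 2*c₀^2/(p:ℝ)^2 := by
      rw [div_pow, mul_pow, Real.sq_sqrt (by norm_num : (0:ℝ) ≤ 2)]
    calc frobNorm (vecMulVec u u - vecMulVec v v)^2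
        ≤ (Real.sqrt 2 * c₀ / p)^2 := by apply pow_le_pow_left₀ hw0 huv
      _ = 2*c₀^2/(p:ℝ)^2 := heq
  -- final assembly
  have hmain : (p:ℝ)*δ/8 * frobNorm (H - vecMulVec u u)^2
      ≤ (p:ℝ)*δ/4 * frobNorm (H - vecMulVec v v)^2 + δ*c₀^2/(2*p) := by
    have h1 : frobNorm (H - vecMulVec u u)^2
        ≤ 2*frobNorm (H - vecMulVec v v)^2 + 2*(2*c₀^2/(p:ℝ)^2) := by linarith
    have h2 := mul_le_mul_of_nonneg_left h1 (show (0:ℝ) ≤ (p:ℝ)*δ/8 by positivity)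
    have heq : (p:ℝ)*δ/8 * (2*frobNorm (H - vecMulVec v v)^2 + 2*(2*c₀^2/(p:ℝ)^2))
        = (p:ℝ)*δ/4 * frobNorm (H - vecMulVec v v)^2 + δ*c₀^2/(2*p) := by
      field_simp; ring
    linarith
  have hdc : δ*c₀^2/(2*(p:ℝ)) ≤ c₀*c₂/16 := by
    rw [div_le_div_iff₀ (by positivity) (by norm_num)]
    nlinarith [mul_le_mul_of_nonneg_right hPc (le_of_lt (by positivity : (0:ℝ) < 2*c₀))]
  have hs2 : Real.sqrt 2 ≤ 23/16 := by
    nlinarith [Real.sq_sqrt (show (0:ℝ) ≤ 2 by norm_num), Real.sqrt_nonneg 2]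
  have hs2cc : Real.sqrt 2 * c₀ * c₂ ≤ 23/16 * (c₀*c₂) := by
    calc Real.sqrt 2 * c₀ * c₂ ≤ 23/16 * c₀ * c₂ :=
          mul_le_mul_of_nonneg_right (mul_le_mul_of_nonneg_right hs2 hc₀.le) hc₂.le
      _ = 23/16 * (c₀*c₂) := by ring
  rw [hsplit]
  linarith [hmain, hdc, key2, hX2, hs2cc]
end

section
/- Let H ∈ F¹, let Π and Π̂ be p×p orthogonal projection matrices with ⟨H, Π̂⟩ = 0, and let Σ be a p×p symmetric positive-semidefinite matrix with Σ ⪯ λI for some λ ≥ 0. Then ⟨ΠΣΠ, H⟩ ≤ λ·‖Π − Π̂‖_F. (In particular ‖H‖_F ≤ 1 for every H ∈ F¹.) -/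
open Matrix Finset

lemma psd_trace_nonneg {p : ℕ} {M : Matrix (Fin p) (Fin p) ℝ} (hM : M.PosSemidef) :
    0 ≤ M.trace := by
  refine Finset.sum_nonneg fun i _ => ?_
  have := hM.2 (Finsupp.single i 1)
  simpa [dotProduct, mulVec, Pi.single_apply, Finset.mul_sum] using this

lemma trace_mul_psd_nonneg {p : ℕ} {A B : Matrix (Fin p) (Fin p) ℝ}
    (hA : A.PosSemidef) (hB : B.PosSemidef) : 0 ≤ (A * B).trace := by
  obtain ⟨L, hL⟩ : ∃ L : Matrix (Fin p) (Fin p) ℝ, A = Lᴴ * L := by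
    open scoped MatrixOrder Matrix.Norms.L2Operator in
    exact CStarAlgebra.nonneg_iff_eq_star_mul_self.mp hA.nonneg
  have h2 : (L * B * Lᴴ).PosSemidef := hB.mul_mul_conjTranspose_same L
  have h3 : (A * B).trace = (L * B * Lᴴ).trace := by
    rw [hL, Matrix.mul_assoc, trace_mul_comm, Matrix.mul_assoc]
  rw [h3]
  exact psd_trace_nonneg h2

lemma frobNorm_le_one {p : ℕ} (H' : Matrix (Fin p) (Fin p) ℝ) (hH' : H' ∈ fantope1) :
    frobNorm H' ≤ 1 := by
  obtain ⟨h1, h2, h3⟩ := hH'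
  have hsym : ∀ i j, H' j i = H' i j := fun i j => by
    conv_lhs => rw [← h1.1.eq]
    simp [conjTranspose_apply]
  have hsum : ∑ i, ∑ j, (H' i j) ^ 2 = (H' * H').trace := by
    simp only [Matrix.trace, Matrix.mul_apply, Matrix.diag]
    refine Finset.sum_congr rfl fun i _ => Finset.sum_congr rfl fun j _ => ?_
    rw [pow_two, hsym i j]
  have key : (H' * H').trace ≤ 1 := by
    have := trace_mul_psd_nonneg h1 h2
    rw [Matrix.mul_sub, mul_one, trace_sub, sub_nonneg] at this
    calc (H' * H').trace ≤ H'.trace := this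
    _ = 1 := h3
  have : Real.sqrt (∑ i, ∑ j, (H' i j) ^ 2) ≤ Real.sqrt 1 :=
    Real.sqrt_le_sqrt (by rw [hsum]; exact key)
  simpa [frobNorm] using this

lemma frobInner_le_norm {p : ℕ} (A B : Matrix (Fin p) (Fin p) ℝ) :
    frobInner A B ≤ frobNorm A * frobNorm B := by
  rw [frobInner_eq_sum, frobNorm, frobNorm]
  simp_rw [← Finset.sum_product' (s := (univ : Finset (Fin p))) (t := univ)]
  exact Real.sum_mul_le_sqrt_mul_sqrt _ _ _

/-- For H ∈ F¹, orthogonal projections Π, Π̂ with ⟨H, Π̂⟩ = 0, and a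
symmetric PSD Σ with Σ ⪯ λI (λ ≥ 0), one has ⟨ΠΣΠ, H⟩ ≤ λ‖Π − Π̂‖_F; in particular
every member of F¹ has Frobenius norm at most 1. -/
theorem stmt13 {p : ℕ} (H P Phat Sig : Matrix (Fin p) (Fin p) ℝ) (lam : ℝ)
    (hH : H ∈ fantope1)
    (hPsymm : P.IsSymm) (hPproj : P * P = P)
    (hPhsymm : Phat.IsSymm) (hPhproj : Phat * Phat = Phat)
    (horth : frobInner H Phat = 0)
    (hSig : Sig.PosSemidef) (hlam : 0 ≤ lam)
    (hSigle : (lam • (1 : Matrix (Fin p) (Fin p) ℝ) - Sig).PosSemidef) :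
    frobInner (P * Sig * P) H ≤ lam * frobNorm (P - Phat) ∧
    (∀ H' ∈ fantope1 (p := p), frobNorm H' ≤ 1) := by
  refine ⟨?_, fun H' h => frobNorm_le_one H' h⟩
  obtain ⟨hHpsd, hIH, htr⟩ := hH
  have hHt : Hᵀ = H := by
    have := hHpsd.1.eq
    rwa [show Hᴴ = Hᵀ from rfl] at this
  have hPt : Pᵀ = P := hPsymm
  have hPct : Pᴴ = P := by
    rw [show Pᴴ = Pᵀ from rfl]; exact hPt
  have hSt : Sigᵀ = Sig := by
    have := hSig.1.eq
    rwa [show Sigᴴ = Sigᵀ from rfl] at this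
  have hM : (P * H * P).PosSemidef := by
    have := hHpsd.mul_mul_conjTranspose_same P
    rwa [hPct] at this
  -- step AB
  have stepAB : frobInner (P * Sig * P) H = (Sig * (P * H * P)).trace := by
    have e1 : (P * Sig * P)ᵀ = P * (Sig * P) := by
      rw [transpose_mul, transpose_mul, hPt, hSt]
    rw [frobInner, e1]
    calc (P * (Sig * P) * H).trace = ((Sig * P) * H * P).trace :=
          (trace_mul_cycle (Sig * P) H P).symm
      _ = (Sig * (P * H * P)).trace := by simp [Matrix.mul_assoc]
  -- step C
  have stepC : (Sig * (P * H * P)).trace ≤ lam * (P * H * P).trace := by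
    have h0 := trace_mul_psd_nonneg hSigle hM
    rw [Matrix.sub_mul, Matrix.smul_mul, Matrix.one_mul, trace_sub, trace_smul,
      smul_eq_mul, sub_nonneg] at h0
    exact h0
  -- step D
  have stepD : (P * H * P).trace = (H * P).trace := by
    rw [trace_mul_cycle P H P, hPproj, trace_mul_comm]
  -- step E
  have horth' : (H * Phat).trace = 0 := by
    rw [frobInner, hHt] at horth; exact horth
  have stepE : (H * P).trace = frobInner H (P - Phat) := by
    rw [frobInner, hHt, Matrix.mul_sub, trace_sub, horth', sub_zero]
  -- step F
  have hnorm : frobNorm H ≤ 1 := frobNorm_le_one H ⟨hHpsd, hIH, htr⟩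
  have stepF : frobInner H (P - Phat) ≤ frobNorm (P - Phat) := by
    calc frobInner H (P - Phat) ≤ frobNorm H * frobNorm (P - Phat) := frobInner_le_norm _ _
      _ ≤ 1 * frobNorm (P - Phat) :=
          mul_le_mul_of_nonneg_right hnorm (frobNorm_nonneg _)
      _ = frobNorm (P - Phat) := one_mul _
  calc frobInner (P * Sig * P) H = (Sig * (P * H * P)).trace := stepAB
    _ ≤ lam * (P * H * P).trace := stepC
    _ = lam * frobInner H (P - Phat) := by rw [stepD, stepE]
    _ ≤ lam * frobNorm (P - Phat) := mul_le_mul_of_nonneg_left stepF hlam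
end

section
/- Let M be a p×p real symmetric matrix and let K : [0,1]² → ℝ be the piecewise-constant kernel K(s,t) = M_{ij} for s ∈ I_i, t ∈ I_j. If φ̃ ∈ L²(0,1) is an eigenfunction of the integral operator f ↦ ∫₀¹ K(·,s)f(s) ds with eigenvalue λ̃ ≠ 0, then φ̃ is almost everywhere equal to a function that is constant on each interval I_i, and the vector v ∈ ℝ^p whose i-th entry is p^{−1/2} times the value of φ̃ on I_i satisfies Mv = pλ̃·v and ‖v‖₂ = ‖φ̃‖_{L²(0,1)}. -/
open Matrix Finset MeasureTheory

/-- Index (0-based) of the interval I_l containing t, where I₁ = [0,1/p] and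
I_l = ((l−1)/p, l/p] for 2 ≤ l ≤ p. -/
noncomputable def idxFin (p : ℕ) (hp : 0 < p) (t : ℝ) : Fin p :=
  ⟨min (p - 1) (max 1 ⌈(p : ℝ) * t⌉₊ - 1), by omega⟩

lemma idx_eq (p : ℕ) (hp : 0 < p) (j : Fin p) (s : ℝ)
    (hs : s ∈ Set.Ioc ((j:ℝ)/p) (((j:ℝ)+1)/p)) : idxFin p hp s = j := by
  have hp' : (0:ℝ) < p := Nat.cast_pos.mpr hp
  have h1 : (j:ℝ) < p * s := by
    have := hs.1; rw [div_lt_iff₀ hp'] at this; linarith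
  have h2 : p * s ≤ (j:ℝ) + 1 := by
    have := hs.2; rw [le_div_iff₀ hp'] at this; linarith
  have hceil : ⌈(p:ℝ) * s⌉₊ = (j : ℕ) + 1 := by
    rw [Nat.ceil_eq_iff (by omega)]
    constructor
    · push_cast; simpa using h1
    · push_cast; simpa using h2
  apply Fin.ext
  have hjp := j.isLt
  simp only [idxFin, hceil]
  omega

lemma step_integral (p : ℕ) (hp : 0 < p) (G : Fin p → ℝ) :
    ∫ s in Set.Ioc (0:ℝ) 1, G (idxFin p hp s) = (∑ j, G j) / p := by
  have hp' : (0:ℝ) < p := Nat.cast_pos.mpr hp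
  have hle : ∀ k : ℕ, ((k:ℝ)/p) ≤ ((k+1:ℕ):ℝ)/p := by
    intro k; gcongr <;> push_cast <;> linarith
  have hEq : ∀ k : ℕ, (hk : k < p) → Set.EqOn (fun s => G (idxFin p hp s))
      (fun _ => G ⟨k, hk⟩) (Set.Ioc ((k:ℝ)/p) (((k+1:ℕ):ℝ)/p)) := by
    intro k hk s hs
    push_cast at hs
    have : idxFin p hp s = ⟨k, hk⟩ := idx_eq p hp ⟨k, hk⟩ s (by simpa using hs)
    simp [this]
  have hpiece : ∀ k : ℕ, (hk : k < p) →
      ∫ s in ((k:ℝ)/p)..(((k+1:ℕ):ℝ)/p), G (idxFin p hp s) = G ⟨k, hk⟩ / p := by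
    intro k hk
    rw [intervalIntegral.integral_of_le (hle k)]
    rw [setIntegral_congr_fun measurableSet_Ioc (hEq k hk)]
    rw [setIntegral_const]
    rw [measureReal_def, Real.volume_Ioc]
    rw [ENNReal.toReal_ofReal (by push_cast; rw [sub_nonneg]; push_cast at hle ⊢; exact hle k)]
    push_cast
    rw [smul_eq_mul]
    field_simp
    ring
  have hint : ∀ k < p, IntervalIntegrable (fun s => G (idxFin p hp s)) volume
      ((fun n : ℕ => (n:ℝ)/p) k) ((fun n : ℕ => (n:ℝ)/p) (k+1)) := by
    intro k hk
    rw [intervalIntegrable_iff_integrableOn_Ioc_of_le (hle k)]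
    exact (integrableOn_const (by simp)).congr_fun
      (hEq k hk).symm measurableSet_Ioc
  have hsum := intervalIntegral.sum_integral_adjacent_intervals (μ := volume)
      (a := fun n : ℕ => (n:ℝ)/p) (n := p) hint
  simp only [Nat.cast_zero, zero_div] at hsum
  have hap : ((p:ℝ))/p = 1 := div_self (ne_of_gt hp')
  rw [hap] at hsum
  have : ∑ k ∈ Finset.range p, ∫ s in ((k:ℝ)/p)..(((k+1:ℕ):ℝ)/p), G (idxFin p hp s)
      = ∑ k ∈ Finset.range p, (if hk : k < p then G ⟨k, hk⟩ / p else 0) := by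
    apply Finset.sum_congr rfl
    intro k hk
    rw [dif_pos (Finset.mem_range.mp hk)]
    exact hpiece k (Finset.mem_range.mp hk)
  rw [this] at hsum
  rw [← intervalIntegral.integral_of_le (by norm_num : (0:ℝ) ≤ 1), ← hsum]
  rw [Finset.sum_div, ← Fin.sum_univ_eq_sum_range (fun k => if hk : k < p then G ⟨k, hk⟩ / p else 0)]
  apply Finset.sum_congr rfl
  intro j _
  rw [dif_pos j.isLt]

/-- if f ∈ L²(0,1) is an eigenfunction, with eigenvalue λ̃ ≠ 0, of the integral
operator with piecewise-constant kernel K(s,t) = M_{ij} on I_i × I_j, then f agrees a.e. with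
a function constant on each I_i, and the vector v with v_i = p^{-1/2}·(value on I_i)
satisfies Mv = pλ̃·v and ‖v‖₂ = ‖f‖_{L²(0,1)}. -/
theorem stmt17 (p : ℕ) (hp : 0 < p) (M : Matrix (Fin p) (Fin p) ℝ) (hM : M.IsSymm)
    (lamt : ℝ) (hlamt : lamt ≠ 0) (f : ℝ → ℝ)
    (hfL2 : MeasureTheory.MemLp f 2 (volume.restrict (Set.Ioc (0:ℝ) 1)))
    (hfne : ¬ f =ᵐ[volume.restrict (Set.Ioc (0:ℝ) 1)] 0)
    (heig : ∀ᵐ t ∂(volume.restrict (Set.Ioc (0:ℝ) 1)),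
      ∫ s in (0:ℝ)..1, M (idxFin p hp t) (idxFin p hp s) * f s = lamt * f t) :
    ∃ c : Fin p → ℝ,
      (∀ᵐ t ∂(volume.restrict (Set.Ioc (0:ℝ) 1)), f t = c (idxFin p hp t)) ∧
      M *ᵥ (fun i => (Real.sqrt p)⁻¹ * c i) = ((p : ℝ) * lamt) • (fun i => (Real.sqrt p)⁻¹ * c i) ∧
      l2norm (fun i => (Real.sqrt p)⁻¹ * c i) = Real.sqrt (∫ t in (0:ℝ)..1, f t ^ 2) := by
  have hp' : (0:ℝ) < p := Nat.cast_pos.mpr hp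
  set c : Fin p → ℝ := fun i => lamt⁻¹ * ∫ s in Set.Ioc (0:ℝ) 1, M i (idxFin p hp s) * f s with hc
  have h_ae : ∀ᵐ t ∂(volume.restrict (Set.Ioc (0:ℝ) 1)), f t = c (idxFin p hp t) := by
    filter_upwards [heig] with t ht
    rw [intervalIntegral.integral_of_le (by norm_num : (0:ℝ) ≤ 1)] at ht
    rw [hc]
    simp only
    rw [ht]
    field_simp
  refine ⟨c, h_ae, ?_, ?_⟩
  · have hsum : ∀ i, ∑ j, M i j * c j = (p:ℝ) * lamt * c i := by
      intro i
      have h1 : ∫ s in Set.Ioc (0:ℝ) 1, M i (idxFin p hp s) * f s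
          = ∫ s in Set.Ioc (0:ℝ) 1, (fun j => M i j * c j) (idxFin p hp s) := by
        apply integral_congr_ae
        filter_upwards [h_ae] with s hs
        rw [hs]
      have h2 := step_integral p hp (fun j => M i j * c j)
      have h3 : c i = lamt⁻¹ * ((∑ j, M i j * c j) / p) := by
        rw [hc]; simp only; rw [h1, h2]
      rw [h3]
      field_simp
    funext i
    simp only [Matrix.mulVec, dotProduct, Pi.smul_apply, smul_eq_mul]
    calc ∑ j, M i j * ((Real.sqrt p)⁻¹ * c j)
        = (Real.sqrt p)⁻¹ * ∑ j, M i j * c j := by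
          rw [Finset.mul_sum]; exact Finset.sum_congr rfl (fun j _ => by ring)
      _ = (p:ℝ) * lamt * ((Real.sqrt p)⁻¹ * c i) := by rw [hsum i]; ring
  · have hsq : ∫ t in (0:ℝ)..1, f t ^ 2 = (∑ j, c j ^ 2) / p := by
      rw [intervalIntegral.integral_of_le (by norm_num : (0:ℝ) ≤ 1)]
      rw [show (∫ t in Set.Ioc (0:ℝ) 1, f t ^ 2)
          = ∫ t in Set.Ioc (0:ℝ) 1, (fun j => c j ^ 2) (idxFin p hp t) from
        integral_congr_ae (by filter_upwards [h_ae] with t ht; rw [ht])]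
      exact step_integral p hp (fun j => c j ^ 2)
    rw [hsq, l2norm]
    congr 1
    rw [Finset.sum_div]
    apply Finset.sum_congr rfl
    intro j _
    rw [mul_pow, ← Real.sqrt_inv, Real.sq_sqrt (by positivity)]
    ring
end
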